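/- If a concurrent program P with k threads has a sequentially consistent interleaving with at most π preemptions, then there exists a set 𝒫 of at most π events (none the last of its thread) and an ordering of the resulting π′ + k blocks (π′ = |𝒫| ≤ π), extending per-thread block order, whose induced event sequence is sequentially consistent and in which no two consecutive blocks belong to the same thread. -/

import Mathlib

/-- Memory events: reads and writes of natural-number values to variables of type `V`. -/
inductive Event (V : Type) where
  | read  (x : V) (d : ℕ)
  | write (x : V) (d : ℕ)
deriving DecidableEq

variable {V ι : Type}

/-- A sequence of events is sequentially consistent (SC): every read `r(x,d)` has a
preceding write `w(x,d)` with no write of a different value to `x` in between. -/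
def SC (σ : List (Event V)) : Prop :=
  ∀ (p : ℕ) x d, σ[p]? = some (Event.read x d) →
    ∃ q, q < p ∧ σ[q]? = some (Event.write x d) ∧
      ∀ r, q < r → r < p → ∀ d', d' ≠ d → σ[r]? ≠ some (Event.write x d')

/-- `σ` is an interleaving of the given threads: its restriction to each
thread identifier equals that thread's event sequence. -/
def IsInterleaving [DecidableEq ι] (threads : ι → List (Event V)) (σ : List (ι × Event V)) : Prop :=
  ∀ i, σ.filterMap (fun a => if a.1 = i then some a.2 else none) = threads i

/-- A preemption occurs at position `j`: the events at `j` and `j+1` are from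
different threads and the event at `j` is not the last event of its thread. -/
def PreemptionAt (σ : List (ι × Event V)) (j : ℕ) : Prop :=
  ∃ a b, σ[j]? = some a ∧ σ[j + 1]? = some b ∧ a.1 ≠ b.1 ∧
    ∃ r c, j < r ∧ σ[r]? = some c ∧ c.1 = a.1

open Classical in
/-- The number of preemption positions of `σ`. -/
noncomputable def numPreemptions (σ : List (ι × Event V)) : ℕ :=
  ((Finset.range σ.length).filter fun j => PreemptionAt σ j).card

open Classical in
/-- The number of context switches of `σ` (adjacent events of different threads). -/
noncomputable def numSwitches (σ : List (ι × Event V)) : ℕ :=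
  ((Finset.range σ.length).filter fun j =>
    ∃ a b, σ[j]? = some a ∧ σ[j + 1]? = some b ∧ a.1 ≠ b.1).card

/-- The (increasing) list of positions of `σ` carrying events of thread `i`. -/
def threadPositions [DecidableEq ι] (σ : List (ι × Event V)) (i : ι) : List ℕ :=
  (List.range σ.length).filter fun p => decide ((σ[p]?).map Prod.fst = some i)

/-- The position in `σ` of the `j`-th event of thread `i`. -/
def posOf [DecidableEq ι] (σ : List (ι × Event V)) (i : ι) (j : ℕ) : ℕ :=
  (threadPositions σ i).getD j 0

/-- All events of thread `t` occur before all events of thread `t'` in `σ`. -/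
def ThreadBefore [DecidableEq ι] (σ : List (ι × Event V)) (t t' : ι) : Prop :=
  ∀ p ∈ threadPositions σ t, ∀ q ∈ threadPositions σ t', p < q

/-- The event is a write to variable `x`. -/
def writesTo (x : V) : Event V → Prop
  | Event.write y _ => y = x
  | _ => False

/-- A 1-writer program: for each variable, a single thread performs all writes to it. -/
def OneWriter (threads : ι → List (Event V)) : Prop :=
  ∀ x i i', (∃ e ∈ threads i, writesTo x e) → (∃ e ∈ threads i', writesTo x e) → i = i'

/-- The events of thread `i` from its index `s` onwards appear contiguously in `σ`. -/
def ContiguousFrom [DecidableEq ι] (σ : List (ι × Event V)) (i : ι) (s : ℕ) : Prop :=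
  ∀ j, s ≤ j → j + 1 < (threadPositions σ i).length → posOf σ i (j + 1) = posOf σ i j + 1

/-- Conflict-graph edge `tr → tw` between outer blocks (suffixes of the threads
starting at indices `s tr`, `s tw`): the last write to some variable `x` in the
outer block of `tw` conflicts with a read of `x` in the outer block of `tr`. -/
def ConflictEdge [DecidableEq ι] (threads : ι → List (Event V)) (s : ι → ℕ) (tr tw : ι) : Prop :=
  tr ≠ tw ∧ ∃ x d d' jr jw, d ≠ d' ∧
    s tr ≤ jr ∧ (threads tr)[jr]? = some (Event.read x d) ∧
    s tw ≤ jw ∧ (threads tw)[jw]? = some (Event.write x d') ∧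
    ∀ j d'', jw < j → (threads tw)[j]? ≠ some (Event.write x d'')

/-- Splitting a list into contiguous blocks immediately after each position in `cut`. -/
def splitAtCuts {α : Type} (l : List α) (cut : Finset ℕ) : List (List α) :=
  let cs := cut.sort (· ≤ ·)
  ((0 :: cs.map (· + 1)).zip (cs.map (· + 1) ++ [l.length])).map fun p => (l.take p.2).drop p.1

set_option linter.unusedSectionVars false

section Aux
variable [DecidableEq ι]

variable [DecidableEq ι]

lemma threadPositions_sorted (σ : List (ι × Event V)) (i : ι) :
    (threadPositions σ i).Pairwise (· < ·) :=
  List.Pairwise.filter _ List.pairwise_lt_range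

lemma mem_threadPositions_iff {σ : List (ι × Event V)} {i : ι} {p : ℕ} :
    p ∈ threadPositions σ i ↔ (σ[p]?).map Prod.fst = some i := by
  unfold threadPositions
  simp only [List.mem_filter, List.mem_range, decide_eq_true_eq, and_iff_right_iff_imp]
  intro h
  by_contra hlen
  rw [List.getElem?_eq_none (le_of_not_gt hlen)] at h
  simp at h

lemma threadPositions_cons (a : ι × Event V) (σ : List (ι × Event V)) (i : ι) :
    threadPositions (a :: σ) i =
      (if a.1 = i then [0] else []) ++ (threadPositions σ i).map Nat.succ := by
  unfold threadPositions
  rw [List.length_cons, List.range_succ_eq_map, List.filter_cons, List.filter_map]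
  have h1 : (fun p => decide (((a :: σ)[p]?).map Prod.fst = some i)) ∘ Nat.succ
      = fun p => decide ((σ[p]?).map Prod.fst = some i) := by
    funext p; simp
  rw [h1]
  by_cases h : a.1 = i <;> simp [h]

lemma length_threadPositions (σ : List (ι × Event V)) (i : ι) :
    (threadPositions σ i).length =
      (σ.filterMap (fun a => if a.1 = i then some a.2 else none)).length := by
  induction σ with
  | nil => simp [threadPositions]
  | cons a σ ih =>
    rw [threadPositions_cons, List.filterMap_cons]
    by_cases h : a.1 = i <;> simp [h, ih]

lemma posOf_get {σ : List (ι × Event V)} {i : ι} {j : ℕ}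
    (hj : j < (threadPositions σ i).length) :
    posOf σ i j = (threadPositions σ i).get ⟨j, hj⟩ :=
  List.getD_eq_getElem _ _ hj

lemma posOf_mem {σ : List (ι × Event V)} {i : ι} {j : ℕ}
    (hj : j < (threadPositions σ i).length) :
    posOf σ i j ∈ threadPositions σ i := by
  rw [posOf_get hj]; exact List.get_mem _ _

lemma posOf_strictMono {σ : List (ι × Event V)} {i : ι} {j j' : ℕ}
    (h : j < j') (hj' : j' < (threadPositions σ i).length) :
    posOf σ i j < posOf σ i j' := by
  rw [posOf_get (lt_trans h hj'), posOf_get hj']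
  exact (threadPositions_sorted σ i).sortedLT.strictMono_get (show (⟨j, _⟩ : Fin _) < ⟨j', _⟩ from h)

lemma not_mem_between {σ : List (ι × Event V)} {i : ι} {j q : ℕ}
    (hj : j + 1 < (threadPositions σ i).length)
    (h1 : posOf σ i j < q) (h2 : q < posOf σ i (j + 1)) :
    (σ[q]?).map Prod.fst ≠ some i := by
  intro hq
  obtain ⟨m, hm⟩ := List.mem_iff_get.1 (mem_threadPositions_iff.2 hq)
  have hs := (threadPositions_sorted σ i).sortedLT.strictMono_get (α := ℕ)
  have hjm : (⟨j, lt_trans (Nat.lt_succ_self j) hj⟩ : Fin _) < m := by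
    rw [← hs.lt_iff_lt]; rw [hm, ← posOf_get]; exact h1
  have hmj : m < (⟨j + 1, hj⟩ : Fin _) := by
    rw [← hs.lt_iff_lt]; rw [hm, ← posOf_get]; exact h2
  have := hjm.trans hmj
  simp [Fin.lt_def] at hjm hmj
  omega

end Aux

/-- if a program has an SC interleaving with at most `π` preemptions,
then there is a set of at most `π` preemption points (none the last of its thread) and
an SC ordering of the resulting blocks, extending per-thread block order, in which
blocks appear contiguously and no two consecutive blocks belong to the same thread. -/
theorem stmt18 {V : Type} (k π : ℕ) (threads : Fin k → List (Event V))
    (σ : List (Fin k × Event V))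
    (hσ : IsInterleaving threads σ)
    (hsc : SC (σ.map Prod.snd))
    (hp : numPreemptions σ ≤ π) :
    ∃ cuts : Fin k → Finset ℕ,
      (∀ i, ∀ c ∈ cuts i, c + 1 < (threads i).length) ∧
      (∑ i, (cuts i).card) ≤ π ∧
      ∃ τ : List (Fin k × Event V),
        IsInterleaving threads τ ∧ SC (τ.map Prod.snd) ∧
        (∀ i j, j + 1 < (threads i).length → j ∉ cuts i →
            posOf τ i (j + 1) = posOf τ i j + 1) ∧
        (∀ i, ∀ c ∈ cuts i, (τ[posOf τ i c + 1]?).map Prod.fst ≠ some i) := by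
  classical
  have len_tp : ∀ i, (threadPositions σ i).length = (threads i).length := fun i => by
    rw [length_threadPositions, hσ i]
  set cuts : Fin k → Finset ℕ := fun i =>
    (Finset.range (threads i).length).filter
      (fun j => j + 1 < (threads i).length ∧ posOf σ i (j + 1) ≠ posOf σ i j + 1) with hcuts
  have mem_cuts : ∀ {i c}, c ∈ cuts i ↔
      c < (threads i).length ∧ c + 1 < (threads i).length ∧
        posOf σ i (c + 1) ≠ posOf σ i c + 1 := by
    intro i c; simp [hcuts, Finset.mem_filter, Finset.mem_range, and_assoc]
  -- key gap fact
  have gap : ∀ {i c}, c ∈ cuts i → posOf σ i c + 1 < posOf σ i (c + 1) := by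
    intro i c hc
    obtain ⟨_, h1, h2⟩ := mem_cuts.1 hc
    have := posOf_strictMono (show c < c + 1 by omega) (by rw [len_tp]; exact h1)
    omega
  have next_not_i : ∀ {i c}, c ∈ cuts i →
      (σ[posOf σ i c + 1]?).map Prod.fst ≠ some i := by
    intro i c hc
    obtain ⟨_, h1, _⟩ := mem_cuts.1 hc
    exact not_mem_between (by rw [len_tp]; exact h1)
      (Nat.lt_succ_self _) (gap hc)
  refine ⟨cuts, fun i c hc => (mem_cuts.1 hc).2.1, ?_, σ, hσ, hsc, ?_, ?_⟩
  · -- card bound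
    have hsum : (∑ i, (cuts i).card) = (Finset.univ.sigma cuts).card :=
      (Finset.card_sigma _ _).symm
    rw [hsum]
    refine le_trans (Finset.card_le_card_of_injOn (fun p => posOf σ p.1 p.2) ?_ ?_) hp
    · rintro ⟨i, c⟩ hm
      dsimp only
      rw [Finset.mem_coe, Finset.mem_sigma] at hm
      have hc : c ∈ cuts i := hm.2
      obtain ⟨hcl, h1, _⟩ := mem_cuts.1 hc
      have hcl' : c < (threadPositions σ i).length := by rw [len_tp]; exact hcl
      have h1' : c + 1 < (threadPositions σ i).length := by rw [len_tp]; exact h1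
      have hmem := posOf_mem hcl'
      have hmem1 := posOf_mem h1'
      have hfst := mem_threadPositions_iff.1 hmem
      have hfst1 := mem_threadPositions_iff.1 hmem1
      obtain ⟨a, ha⟩ : ∃ a, σ[posOf σ i c]? = some a := by
        cases h : σ[posOf σ i c]? with
        | none => rw [h] at hfst; simp at hfst
        | some a => exact ⟨a, rfl⟩
      have hai : a.1 = i := by rw [ha] at hfst; simpa using hfst
      obtain ⟨r1, hr1⟩ : ∃ a, σ[posOf σ i (c+1)]? = some a := by
        cases h : σ[posOf σ i (c+1)]? with
        | none => rw [h] at hfst1; simp at hfst1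
        | some a => exact ⟨a, rfl⟩
      have hr1i : r1.1 = i := by rw [hr1] at hfst1; simpa using hfst1
      have hlt1 : posOf σ i (c+1) < σ.length :=
        List.getElem?_eq_some_iff.1 hr1 |>.fst
      have hg := gap hc
      obtain ⟨b, hb⟩ : ∃ b, σ[posOf σ i c + 1]? = some b := by
        cases h : σ[posOf σ i c + 1]? with
        | none =>
          have := List.getElem?_eq_none_iff.1 h
          omega
        | some b => exact ⟨b, rfl⟩
      have hbne : a.1 ≠ b.1 := by
        intro h
        apply next_not_i hc
        rw [hb]; simp [← h, hai]
      rw [Finset.mem_coe, Finset.mem_filter, Finset.mem_range]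
      constructor
      · have := List.getElem?_eq_some_iff.1 ha |>.fst; exact this
      · exact ⟨a, b, ha, hb, hbne, posOf σ i (c+1), r1, by omega, hr1, by rw [hr1i, hai]⟩
    · rintro ⟨i, c⟩ hm ⟨i', c'⟩ hm' heq
      simp only [Finset.coe_sigma, Set.mem_sigma_iff, Finset.mem_coe] at hm hm'
      have hc : c ∈ cuts i := hm.2
      have hc' : c' ∈ cuts i' := hm'.2
      have hcl : c < (threadPositions σ i).length := by
        rw [len_tp]; exact (mem_cuts.1 hc).1
      have hcl' : c' < (threadPositions σ i').length := by
        rw [len_tp]; exact (mem_cuts.1 hc').1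
      have heq : posOf σ i c = posOf σ i' c' := heq
      have hii' : i = i' := by
        have h1 := mem_threadPositions_iff.1 (posOf_mem hcl)
        have h2 := mem_threadPositions_iff.1 (posOf_mem hcl')
        rw [heq] at h1; rw [h1] at h2; simpa using h2
      subst hii'
      have hcc' : c = c' := by
        rcases lt_trichotomy c c' with h | h | h
        · exact absurd heq (ne_of_lt (posOf_strictMono h hcl'))
        · exact h
        · exact absurd heq.symm (ne_of_lt (posOf_strictMono h hcl))
      subst hcc'; rfl
  · -- contiguity off cuts
    intro i j hj hjc
    by_contra hne
    exact hjc (mem_cuts.2 ⟨by omega, hj, hne⟩)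
  · -- next event after a cut is another thread
    intro i c hc
    exact next_not_i hc
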